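/- Let n, k be positive integers with gcd(n, n−k) = 1 and let 1 ≤ i ≤ min{k+1, n−k−1}. Then the digraph D_{k,i} is primitive and for every 1 ≤ m ≤ n its m-th smallest local exponent is attained at v_m and equals exp_{D_{k,i}}(m) = exp_{D_{k,i}}(v_m) = (n−2)(n−k) + 1 − i + m. -/

import Mathlib

/-- `f : ℕ → V` traces a directed walk of length `t` in the digraph with
adjacency relation `A` if consecutive vertices are joined by arcs. -/
def IsWalk {V : Type*} (A : V → V → Prop) (t : ℕ) (f : ℕ → V) : Prop :=
  ∀ i < t, A (f i) (f (i + 1))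

/-- There is a directed walk of length `t` from `u` to `v`. -/
def HasWalk {V : Type*} (A : V → V → Prop) (t : ℕ) (u v : V) : Prop :=
  ∃ f : ℕ → V, f 0 = u ∧ f t = v ∧ IsWalk A t f

/-- A digraph is strongly connected if every vertex can reach every vertex. -/
def StronglyConnected {V : Type*} (A : V → V → Prop) : Prop :=
  ∀ u v : V, ∃ t : ℕ, HasWalk A t u v

/-- A digraph is primitive if it is strongly connected and for some `t > 0`
there are directed walks of length `t` between every ordered pair of vertices. -/
def IsPrimitive {V : Type*} (A : V → V → Prop) : Prop :=
  StronglyConnected A ∧ ∃ t : ℕ, 0 < t ∧ ∀ u v : V, HasWalk A t u v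

/-- The local exponent at `u`: the least `l` such that for every `t ≥ l` and
every vertex `v` there is a directed walk of length `t` from `u` to `v`. -/
noncomputable def localExp {V : Type*} (A : V → V → Prop) (u : V) : ℕ :=
  sInf {l : ℕ | ∀ t ≥ l, ∀ v : V, HasWalk A t u v}

/-- `kthSmallest f k` is the `k`-th smallest element (1-indexed) of the
multiset of values of `f`. -/
noncomputable def kthSmallest {n : ℕ} (f : Fin n → ℕ) (k : ℕ) : ℕ :=
  (Multiset.sort (Finset.univ.val.map f) (· ≤ ·)).getD (k - 1) 0

/-- A directed cycle of length `c` (a closed walk whose first `c` vertices are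
pairwise distinct), given by its vertex function. -/
def IsCycle {V : Type*} (A : V → V → Prop) (c : ℕ) (f : ℕ → V) : Prop :=
  IsWalk A c f ∧ f c = f 0 ∧ ∀ i < c, ∀ j < c, f i = f j → i = j

/-- A signed digraph: each arc carries a sign `+1` or `-1`. -/
structure SignedDigraph (V : Type*) where
  Adj : V → V → Prop
  sgn : V → V → ℤ
  sgn_unit : ∀ u v : V, Adj u v → sgn u v = 1 ∨ sgn u v = -1

namespace SignedDigraph

variable {V : Type*} (S : SignedDigraph V)

/-- The sign of the walk of length `t` traced by `f`. -/
def walkSign (t : ℕ) (f : ℕ → V) : ℤ :=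
  ∏ i ∈ Finset.range t, S.sgn (f i) (f (i + 1))

/-- There is a pair of SSSD walks of length `t` from `u` to `v`: two walks with
the same endpoints and the same length but different signs. -/
def HasSSSD (t : ℕ) (u v : V) : Prop :=
  ∃ f g : ℕ → V,
    (f 0 = u ∧ f t = v ∧ IsWalk S.Adj t f) ∧
    (g 0 = u ∧ g t = v ∧ IsWalk S.Adj t g) ∧
    S.walkSign t f ≠ S.walkSign t g

/-- A signed digraph is primitive and nonpowerful if from some length on there
are SSSD walk pairs between all ordered pairs of vertices. -/
def IsPrimitiveNonpowerful : Prop :=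
  ∃ l : ℕ, 0 < l ∧ ∀ t ≥ l, ∀ u v : V, S.HasSSSD t u v

/-- The local base at vertex `u`: the least `l` such that for every `t ≥ l` and
every vertex `v` there is a pair of SSSD walks of length `t` from `u` to `v`. -/
noncomputable def localBase (u : V) : ℕ :=
  sInf {l : ℕ | ∀ t ≥ l, ∀ v : V, S.HasSSSD t u v}

/-- All directed cycles of length `c` in `S` have the same sign. -/
def SameSignCycles (c : ℕ) : Prop :=
  ∀ f g : ℕ → V, IsCycle S.Adj c f → IsCycle S.Adj c g →
    S.walkSign c f = S.walkSign c g

end SignedDigraph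

/-- Isomorphism of digraphs. -/
def DigraphIso {V W : Type*} (A : V → V → Prop) (B : W → W → Prop) : Prop :=
  ∃ e : V ≃ W, ∀ u v : V, A u v ↔ B (e u) (e v)

/-- The Hamilton cycle `Cₙ` on `v₁,…,vₙ` (here `vⱼ` is the vertex with 0-based
index `j-1`), with arcs `v₁ → vₙ` and `vⱼ → v_{j-1}` for `2 ≤ j ≤ n`. -/
def CnAdj (n : ℕ) : Fin n → Fin n → Prop := fun a b =>
  (a.val = 0 ∧ b.val = n - 1) ∨ a.val = b.val + 1

/-- The digraph `D_{k,i}`: the Hamilton cycle `Cₙ` together with the arcs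
`vⱼ → v_{n-k+j-1}` for `1 ≤ j ≤ i`. -/
def DkiAdj (n k i : ℕ) : Fin n → Fin n → Prop := fun a b =>
  CnAdj n a b ∨ ∃ j : ℕ, 1 ≤ j ∧ j ≤ i ∧ a.val = j - 1 ∧ b.val = n - k + j - 2

/-- The digraph `𝓛`: `Cₙ` together with the arcs `v₁ → v_{n-2}` and `v₃ → vₙ`. -/
def LAdj (n : ℕ) : Fin n → Fin n → Prop := fun a b =>
  CnAdj n a b ∨ (a.val = 0 ∧ b.val = n - 3) ∨ (a.val = 2 ∧ b.val = n - 1)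

/-- The digraph `F`: the `(n-1)`-cycle `v₁ → vₙ → v_{n-1} → v_{n-3} → ⋯ → v₂ → v₁`
together with the arcs `v₁ → v_{n-2}` and `v_{n-2} → v_{n-3}`. -/
def FAdj (n : ℕ) : Fin n → Fin n → Prop := fun a b =>
  (a.val = 0 ∧ b.val = n - 1) ∨ (a.val = n - 1 ∧ b.val = n - 2) ∨
  (a.val = n - 2 ∧ b.val = n - 4) ∨ (a.val = b.val + 1 ∧ 1 ≤ a.val ∧ a.val ≤ n - 4) ∨
  (a.val = 0 ∧ b.val = n - 3) ∨ (a.val = n - 3 ∧ b.val = n - 4)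

/-- The digraph `F₁`: the `(n-1)`-cycle `v₁ → v_{n-1} → v_{n-2} → ⋯ → v₂ → v₁`
together with the arcs `v₁ → v_{n-2}`, `v₂ → vₙ` and `vₙ → v_{n-1}`. -/
def F1Adj (n : ℕ) : Fin n → Fin n → Prop := fun a b =>
  (a.val = 0 ∧ b.val = n - 2) ∨ (a.val = b.val + 1 ∧ 1 ≤ a.val ∧ a.val ≤ n - 2) ∨
  (a.val = 0 ∧ b.val = n - 3) ∨ (a.val = 1 ∧ b.val = n - 1) ∨ (a.val = n - 1 ∧ b.val = n - 2)

/-- The digraph `F₂`: the `(n-1)`-cycle `v₁ → vₙ → v_{n-2} → v_{n-3} → ⋯ → v₂ → v₁`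
together with the arcs `v₁ → v_{n-2}`, `vₙ → v_{n-1}` and `v_{n-1} → v_{n-3}`. -/
def F2Adj (n : ℕ) : Fin n → Fin n → Prop := fun a b =>
  (a.val = 0 ∧ b.val = n - 1) ∨ (a.val = n - 1 ∧ b.val = n - 3) ∨
  (a.val = b.val + 1 ∧ 1 ≤ a.val ∧ a.val ≤ n - 3) ∨
  (a.val = 0 ∧ b.val = n - 3) ∨ (a.val = n - 1 ∧ b.val = n - 2) ∨ (a.val = n - 2 ∧ b.val = n - 4)

/-- The digraph `F₃`: the `(n-2)`-cycle `v₁ → v_{n-2} → v_{n-3} → ⋯ → v₂ → v₁`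
together with the arcs `v₁ → v_{n-1}`, `v_{n-1} → v_{n-2}`, `v₁ → vₙ` and `vₙ → v_{n-2}`. -/
def F3Adj (n : ℕ) : Fin n → Fin n → Prop := fun a b =>
  (a.val = 0 ∧ b.val = n - 3) ∨ (a.val = b.val + 1 ∧ 1 ≤ a.val ∧ a.val ≤ n - 3) ∨
  (a.val = 0 ∧ b.val = n - 2) ∨ (a.val = n - 2 ∧ b.val = n - 3) ∨
  (a.val = 0 ∧ b.val = n - 1) ∨ (a.val = n - 1 ∧ b.val = n - 3)

/-- The digraph `F₇`: the `(n-1)`-cycle `v₁ → v_{n-1} → v_{n-2} → ⋯ → v₂ → v₁`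
together with the arcs `v₁ → v_{n-2}`, `v₃ → vₙ` and `vₙ → v_{n-1}`. -/
def F7Adj (n : ℕ) : Fin n → Fin n → Prop := fun a b =>
  (a.val = 0 ∧ b.val = n - 2) ∨ (a.val = b.val + 1 ∧ 1 ≤ a.val ∧ a.val ≤ n - 2) ∨
  (a.val = 0 ∧ b.val = n - 3) ∨ (a.val = 2 ∧ b.val = n - 1) ∨ (a.val = n - 1 ∧ b.val = n - 2)

/-- The digraph `F'ᵢ` (for `2 ≤ i ≤ n-3`): the `(n-1)`-cycle
`v₁ → v_{n-1} → v_{n-2} → ⋯ → v₂ → v₁` together with the arcs `v₁ → v_{n-2}`,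
`v_{i+1} → vₙ` and `vₙ → v_{i-1}`. -/
def FpAdj (n i : ℕ) : Fin n → Fin n → Prop := fun a b =>
  (a.val = 0 ∧ b.val = n - 2) ∨ (a.val = b.val + 1 ∧ 1 ≤ a.val ∧ a.val ≤ n - 2) ∨
  (a.val = 0 ∧ b.val = n - 3) ∨ (a.val = i ∧ b.val = n - 1) ∨ (a.val = n - 1 ∧ b.val = i - 2)

/-- The digraph `𝓑₁`: `Cₙ` together with the arcs `v₁ → v_{n-3}` and `v₃ → v_{n-1}`. -/
def B1Adj (n : ℕ) : Fin n → Fin n → Prop := fun a b =>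
  CnAdj n a b ∨ (a.val = 0 ∧ b.val = n - 4) ∨ (a.val = 2 ∧ b.val = n - 2)

/-- The digraph `𝓑₂`: `Cₙ` together with the arcs `v₁ → v_{n-3}` and `v₄ → vₙ`. -/
def B2Adj (n : ℕ) : Fin n → Fin n → Prop := fun a b =>
  CnAdj n a b ∨ (a.val = 0 ∧ b.val = n - 4) ∨ (a.val = 3 ∧ b.val = n - 1)

/-- The digraph `𝓑₃`: `Cₙ` together with the arcs `v₁ → v_{n-3}`, `v₂ → v_{n-2}`
and `v₄ → vₙ`. -/
def B3Adj (n : ℕ) : Fin n → Fin n → Prop := fun a b =>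
  CnAdj n a b ∨ (a.val = 0 ∧ b.val = n - 4) ∨ (a.val = 1 ∧ b.val = n - 3) ∨
  (a.val = 3 ∧ b.val = n - 1)

/-- The digraph `𝓑₄`: `Cₙ` together with the arcs `v₁ → v_{n-3}`, `v₃ → v_{n-1}`
and `v₄ → vₙ`. -/
def B4Adj (n : ℕ) : Fin n → Fin n → Prop := fun a b =>
  CnAdj n a b ∨ (a.val = 0 ∧ b.val = n - 4) ∨ (a.val = 2 ∧ b.val = n - 2) ∨
  (a.val = 3 ∧ b.val = n - 1)

set_option linter.unusedSectionVars false

theorem hasWalk_zero {V : Type*} {A : V → V → Prop} {u v : V} :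
    HasWalk A 0 u v ↔ u = v := by
  constructor
  · rintro ⟨f, h0, ht, -⟩; rw [← h0, ht]
  · rintro rfl; exact ⟨fun _ => u, rfl, rfl, fun i hi => absurd hi (by omega)⟩

theorem hasWalk_succ {V : Type*} {A : V → V → Prop} {t : ℕ} {u v : V} :
    HasWalk A (t+1) u v ↔ ∃ w, HasWalk A t u w ∧ A w v := by
  constructor
  · rintro ⟨f, h0, ht, hw⟩
    exact ⟨f t, ⟨f, h0, rfl, fun i hi => hw i (by omega)⟩, ht ▸ hw t (by omega)⟩
  · rintro ⟨w, ⟨f, h0, ht, hw⟩, hA⟩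
    refine ⟨fun j => if j ≤ t then f j else v, ?_, ?_, ?_⟩
    · simp [h0]
    · simp
    · intro j hj
      rcases Nat.lt_or_ge j t with h | h
      · have h1 : j ≤ t := by omega
        have h2 : j + 1 ≤ t := by omega
        simpa [h1, h2] using hw j h
      · have hjt : j = t := by omega
        have h1 : j ≤ t := by omega
        have h2 : ¬ (j + 1 ≤ t) := by omega
        simpa [h1, h2, hjt, ht] using hA

/-- Entry time of the `s`-th congruence class in `D_{k,i}` starting from vertex `u`. -/
def tauD (n k i u : ℕ) : ℕ → ℕ
  | 0 => 0
  | s + 1 =>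
    if u + 2 ≤ i then
      (if s = 0 then 1 else (u + (n - k) + 2 - i) + (s - 1) * (n - k))
    else (u + 2 - i) + s * (n - k)

theorem tau1_lo {n k i u : ℕ} (h : u + 2 ≤ i) : tauD n k i u 1 = 1 := by
  simp [tauD, h]

theorem tau1_hi {n k i u : ℕ} (h : ¬ u + 2 ≤ i) : tauD n k i u 1 = u + 2 - i := by
  simp [tauD, h]

theorem tauS_lo {n k i u : ℕ} (h : u + 2 ≤ i) (s : ℕ) :
    tauD n k i u (s + 2) = (u + (n - k) + 2 - i) + s * (n - k) := by
  simp [tauD, h]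

theorem tauS_hi {n k i u : ℕ} (h : ¬ u + 2 ≤ i) (s : ℕ) :
    tauD n k i u (s + 1) = (u + 2 - i) + s * (n - k) := by
  simp [tauD, h]

section TauFacts

variable {n k i u : ℕ} (hk : 1 ≤ k) (hi1 : 1 ≤ i) (hik : i ≤ k + 1) (hin : i + k + 1 ≤ n)

include hk hi1 hik hin

theorem tau_lt_succ (s : ℕ) : tauD n k i u s < tauD n k i u (s + 1) := by
  have hnk : 2 ≤ n - k := by omega
  match s with
  | 0 =>
    by_cases h : u + 2 ≤ i
    · rw [tau1_lo h]; simp [tauD]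
    · rw [tau1_hi h]; simp [tauD]; omega
  | 1 =>
    by_cases h : u + 2 ≤ i
    · rw [tau1_lo h, tauS_lo h 0]; omega
    · rw [tauS_hi h 0, tauS_hi h 1]; omega
  | (s' + 2) =>
    by_cases h : u + 2 ≤ i
    · rw [tauS_lo h s', tauS_lo h (s' + 1)]
      have e : (s' + 1) * (n - k) = s' * (n - k) + (n - k) := by ring
      omega
    · rw [tauS_hi h (s' + 1), tauS_hi h (s' + 2)]
      have e : (s' + 2) * (n - k) = (s' + 1) * (n - k) + (n - k) := by ring
      omega

theorem tau_strictMono : StrictMono (tauD n k i u) :=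
  strictMono_nat_of_lt_succ (tau_lt_succ hk hi1 hik hin)

theorem tau_ge (s : ℕ) : s ≤ tauD n k i u s := by
  induction s with
  | zero => simp [tauD]
  | succ m ih => have := tau_lt_succ hk hi1 hik hin (u := u) m; omega

/-- The door property: at time `tauD (s+1) - 1`, the class-`s` vertex is at a door. -/
theorem tau_door (s : ℕ) :
    ∃ x, x < i ∧ x + (tauD n k i u (s + 1) - 1) = u + s * (n - k) := by
  have hnk : 2 ≤ n - k := by omega
  by_cases h : u + 2 ≤ i
  · match s with
    | 0 => exact ⟨u, by omega, by rw [tau1_lo h]; omega⟩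
    | (s' + 1) =>
      refine ⟨i - 1, by omega, ?_⟩
      rw [tauS_lo h s']
      have e : (s' + 1) * (n - k) = s' * (n - k) + (n - k) := by ring
      omega
  · refine ⟨i - 1, by omega, ?_⟩
    rw [tauS_hi h s]
    omega

end TauFacts

theorem modeq_window {n τ a b : ℕ} (h : a ≡ b [MOD n]) (ha1 : τ ≤ a) (hb1 : τ ≤ b)
    (ha : a - τ < n) (hb : b - τ < n) : a = b := by
  have h2 : (a - τ) + τ ≡ (b - τ) + τ [MOD n] := by
    have e1 : a - τ + τ = a := by omega
    have e2 : b - τ + τ = b := by omega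
    rw [e1, e2]; exact h
  have h3 : a - τ ≡ b - τ [MOD n] := Nat.ModEq.add_right_cancel' τ h2
  have h4 : a - τ = b - τ := by
    have h5 := h3
    unfold Nat.ModEq at h5
    rwa [Nat.mod_eq_of_lt ha, Nat.mod_eq_of_lt hb] at h5
  omega

section TauMin

variable {n k i u : ℕ} (hk : 1 ≤ k) (hi1 : 1 ≤ i) (hik : i ≤ k + 1) (hin : i + k + 1 ≤ n)
  (hu : u < n)

include hk hi1 hik hin hu

/-- Minimality: if the class-`s` vertex at time `t ≥ tauD s` is at a door, then
`t` is at least the unique in-window door time `tauD (s+1) - 1`. -/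
theorem tau_min {s t x : ℕ} (hs : tauD n k i u s ≤ t) (hx : x < i)
    (hc : x + t ≡ u + s * (n - k) [MOD n]) : tauD n k i u (s + 1) ≤ t + 1 := by
  have hnk : 2 ≤ n - k := by omega
  by_cases h00 : u + 2 ≤ i ∧ s = 0
  · obtain ⟨h, rfl⟩ := h00
    rw [tau1_lo h]; omega
  by_contra hcon
  push_neg at hcon
  set T := tauD n k i u (s + 1) - 1 with hT
  have htaupos : 1 ≤ tauD n k i u (s + 1) := by
    have := tau_ge hk hi1 hik hin (u := u) (s + 1); omega
  have htT : t < T := by omega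
  obtain ⟨x₀, hx₀i, hx₀⟩ := tau_door hk hi1 hik hin (u := u) (s := s)
  have hcb : x + t ≡ x₀ + T [MOD n] := by rw [hT, hx₀]; exact hc
  set τ := tauD n k i u s with hτ
  have hτT : τ ≤ T := by
    have := tau_lt_succ hk hi1 hik hin (u := u) s; omega
  obtain ⟨w1, w2, w3⟩ : (x₀ + T - τ < n) ∧ (x + t - τ < n) ∧ (i ≤ x₀ + 1) := by
    by_cases h : u + 2 ≤ i
    · rcases s with _ | (_ | s')
      · exact absurd ⟨h, rfl⟩ h00
      · have e1 : tauD n k i u (0 + 1) = 1 := tau1_lo h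
        have e2 : tauD n k i u (0 + 1 + 1) = (u + (n - k) + 2 - i) + 0 * (n - k) := tauS_lo h 0
        refine ⟨by omega, by omega, by omega⟩
      · have e2 : tauD n k i u (s' + 1 + 1) = (u + (n - k) + 2 - i) + s' * (n - k) := tauS_lo h s'
        have e3 : tauD n k i u (s' + 1 + 1 + 1) = (u + (n - k) + 2 - i) + (s' + 1) * (n - k) :=
          tauS_lo h (s' + 1)
        have e : (s' + 1 + 1) * (n - k) = (s' + 1) * (n - k) + (n - k) := by ring
        have e' : (s' + 1) * (n - k) = s' * (n - k) + (n - k) := by ring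
        refine ⟨by omega, by omega, by omega⟩
    · rcases s with _ | s'
      · have e1 : tauD n k i u (0 + 1) = u + 2 - i := tau1_hi h
        have e0 : τ = 0 := by rw [hτ]; rfl
        refine ⟨by omega, by omega, by omega⟩
      · have e2 : tauD n k i u (s' + 1) = (u + 2 - i) + s' * (n - k) := tauS_hi h s'
        have e3 : tauD n k i u (s' + 1 + 1) = (u + 2 - i) + (s' + 1) * (n - k) := tauS_hi h (s' + 1)
        have e' : (s' + 1) * (n - k) = s' * (n - k) + (n - k) := by ring
        refine ⟨by omega, by omega, by omega⟩
  have := modeq_window hcb (by omega) (by omega) w2 w1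
  omega

end TauMin

section Reach

variable {n k i : ℕ} (hk : 1 ≤ k) (hi1 : 1 ≤ i) (hik : i ≤ k + 1) (hin : i + k + 1 ≤ n)

include hk hi1 hik hin

theorem adj_cases {w v : Fin n} (h : DkiAdj n k i w v) :
    (v.val + 1) ≡ w.val [MOD n] ∨ (w.val < i ∧ v.val = w.val + (n - k - 1)) := by
  rcases h with (⟨hw0, hv⟩ | hwv) | ⟨j, hj1, hj2, hw, hv⟩
  · left
    have hvv : v.val + 1 = n := by have := v.isLt; omega
    rw [hvv, hw0]
    exact (Nat.modEq_zero_iff_dvd).mpr dvd_rfl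
  · left; rw [hwv]
  · right
    exact ⟨by omega, by omega⟩

theorem adj_of_down {w v : Fin n} (h : (v.val + 1) ≡ w.val [MOD n]) : DkiAdj n k i w v := by
  have hv : v.val < n := v.isLt
  have hw : w.val < n := w.isLt
  have h' : (v.val + 1) % n = w.val := by
    have := h; unfold Nat.ModEq at this; rwa [Nat.mod_eq_of_lt hw] at this
  rcases Nat.lt_or_ge (v.val + 1) n with hlt | hge
  · exact Or.inl (Or.inr (by rw [← h', Nat.mod_eq_of_lt hlt]))
  · left; left
    have hvn : v.val + 1 = n := by omega
    constructor
    · rw [← h', hvn, Nat.mod_self]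
    · omega

theorem adj_of_jump {w v : Fin n} (hw : w.val < i) (hv : v.val = w.val + (n - k - 1)) :
    DkiAdj n k i w v :=
  Or.inr ⟨w.val + 1, by omega, by omega, by omega, by omega⟩

theorem reach_fwd (u : Fin n) :
    ∀ t (v : Fin n), HasWalk (DkiAdj n k i) t u v →
      ∃ s, tauD n k i u.val s ≤ t ∧ v.val + t ≡ u.val + s * (n - k) [MOD n] := by
  intro t
  induction t with
  | zero =>
    intro v h
    have huv : u = v := hasWalk_zero.mp h
    exact ⟨0, le_refl _, by rw [← huv]; simpa using (Nat.ModEq.refl u.val)⟩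
  | succ t ih =>
    intro v h
    obtain ⟨w, hwalk, hadj⟩ := hasWalk_succ.mp h
    obtain ⟨s, hs, hcong⟩ := ih w hwalk
    rcases adj_cases hk hi1 hik hin hadj with hdown | ⟨hdoor, hval⟩
    · refine ⟨s, by omega, ?_⟩
      calc v.val + (t + 1) = (v.val + 1) + t := by omega
        _ ≡ w.val + t [MOD n] := hdown.add_right t
        _ ≡ u.val + s * (n - k) [MOD n] := hcong
    · refine ⟨s + 1, tau_min hk hi1 hik hin u.isLt hs hdoor hcong, ?_⟩
      calc v.val + (t + 1) = (w.val + t) + (n - k) := by omega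
        _ ≡ (u.val + s * (n - k)) + (n - k) [MOD n] := hcong.add_right _
        _ = u.val + (s + 1) * (n - k) := by ring

theorem reach_bwd (u : Fin n) :
    ∀ t (s : ℕ) (v : Fin n), tauD n k i u.val s ≤ t →
      v.val + t ≡ u.val + s * (n - k) [MOD n] → HasWalk (DkiAdj n k i) t u v := by
  intro t
  induction t with
  | zero =>
    intro s v hs hcong
    have hs0 : s = 0 := by have := tau_ge hk hi1 hik hin (u := u.val) s; omega
    subst hs0
    have hvu : v.val = u.val := by
      have h2 := hcong
      unfold Nat.ModEq at h2
      simpa [Nat.mod_eq_of_lt v.isLt, Nat.mod_eq_of_lt u.isLt] using h2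
    exact hasWalk_zero.mpr (Fin.ext hvu.symm)
  | succ t ih =>
    intro s v hs hcong
    have hn1 : 1 ≤ n := by omega
    by_cases hst : tauD n k i u.val s ≤ t
    · -- extend along the cycle from the class-s vertex at time t
      have hnt : t ≤ n * t := Nat.le_mul_of_pos_left t (by omega)
      set wv := (u.val + s * (n - k) + n * t - t) % n with hwv
      have hwn : wv < n := Nat.mod_lt _ (by omega)
      have hwc : wv + t ≡ u.val + s * (n - k) [MOD n] := by
        calc wv + t ≡ (u.val + s * (n - k) + n * t - t) + t [MOD n] :=
              (Nat.mod_modEq _ n).add_right t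
          _ = (u.val + s * (n - k)) + n * t := by omega
          _ ≡ (u.val + s * (n - k)) + 0 [MOD n] :=
              Nat.ModEq.add_left _ ((Nat.modEq_zero_iff_dvd).mpr ⟨t, rfl⟩)
          _ = u.val + s * (n - k) := by omega
      have hwalk := ih s ⟨wv, hwn⟩ hst hwc
      have hc3 : v.val + 1 ≡ wv [MOD n] := by
        have hc2 : (v.val + 1) + t ≡ wv + t [MOD n] := by
          calc (v.val + 1) + t = v.val + (t + 1) := by omega
            _ ≡ u.val + s * (n - k) [MOD n] := hcong
            _ ≡ wv + t [MOD n] := hwc.symm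
        exact Nat.ModEq.add_right_cancel' t hc2
      exact hasWalk_succ.mpr ⟨⟨wv, hwn⟩, hwalk, adj_of_down hk hi1 hik hin hc3⟩
    · -- a new class enters: use an extra arc from a door vertex
      have hs0 : s ≠ 0 := by
        intro h0; rw [h0] at hst; exact hst (Nat.zero_le t)
      obtain ⟨s', rfl⟩ : ∃ s', s = s' + 1 := ⟨s - 1, by omega⟩
      have hstrict := tau_lt_succ hk hi1 hik hin (u := u.val) s'
      have hts' : tauD n k i u.val s' ≤ t := by omega
      obtain ⟨x, hxi, hxeq⟩ := tau_door hk hi1 hik hin (u := u.val) (s := s')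
      have hT : tauD n k i u.val (s' + 1) = t + 1 := by omega
      rw [hT] at hxeq
      have hxt : x + t = u.val + s' * (n - k) := by omega
      have hxn : x < n := by omega
      have hwalk := ih s' ⟨x, hxn⟩ hts' (hxt ▸ Nat.ModEq.refl _)
      have hcv2 : v.val + 1 ≡ x + (n - k) [MOD n] := by
        apply Nat.ModEq.add_right_cancel' t
        calc (v.val + 1) + t = v.val + (t + 1) := by omega
          _ ≡ u.val + (s' + 1) * (n - k) [MOD n] := hcong
          _ = (u.val + s' * (n - k)) + (n - k) := by ring
          _ = (x + (n - k)) + t := by omega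
      have hveq : v.val = x + (n - k - 1) := by
        have h2 := hcv2
        unfold Nat.ModEq at h2
        rcases Nat.lt_or_ge (v.val + 1) n with hlt | hge
        · rw [Nat.mod_eq_of_lt hlt] at h2
          rcases Nat.lt_or_ge (x + (n - k)) n with hlt2 | hge2
          · rw [Nat.mod_eq_of_lt hlt2] at h2; omega
          · have hxk : x + (n - k) = n := by omega
            rw [hxk, Nat.mod_self] at h2
            omega
        · have hvn : v.val + 1 = n := by have := v.isLt; omega
          rw [hvn, Nat.mod_self] at h2
          have hdvd : n ∣ x + (n - k) := Nat.dvd_of_mod_eq_zero h2.symm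
          have hle : x + (n - k) ≤ n := by omega
          have hpos : 0 < x + (n - k) := by omega
          have := Nat.le_of_dvd hpos hdvd
          have hxk : x + (n - k) = n := Nat.le_antisymm hle (this)
          omega
      exact hasWalk_succ.mpr ⟨⟨x, hxn⟩, hwalk, adj_of_jump hk hi1 hik hin hxi hveq⟩

theorem reach_iff (u : Fin n) (t : ℕ) (v : Fin n) :
    HasWalk (DkiAdj n k i) t u v ↔
      ∃ s, tauD n k i u.val s ≤ t ∧ v.val + t ≡ u.val + s * (n - k) [MOD n] :=
  ⟨reach_fwd hk hi1 hik hin u t v, fun ⟨s, hs, hc⟩ => reach_bwd hk hi1 hik hin u t s v hs hc⟩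

end Reach

section Expo

variable {n k i : ℕ} (hk : 1 ≤ k) (hi1 : 1 ≤ i) (hik : i ≤ k + 1) (hin : i + k + 1 ≤ n)

include hk hi1 hik hin

theorem tau_last {u : ℕ} : tauD n k i u (n - 1) = (n - 2) * (n - k) + u + 2 - i := by
  have hnk : 2 ≤ n - k := by omega
  have hmul : n - k ≤ (n - 2) * (n - k) := Nat.le_mul_of_pos_left _ (by omega)
  by_cases h : u + 2 ≤ i
  · have h3 : n - 1 = (n - 3) + 2 := by omega
    rw [h3, tauS_lo h (n - 3)]
    have e : (n - 2) * (n - k) = (n - 3) * (n - k) + (n - k) := by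
      have h4 : n - 2 = (n - 3) + 1 := by omega
      rw [h4]; ring
    omega
  · have h3 : n - 1 = (n - 2) + 1 := by omega
    rw [h3, tauS_hi h (n - 2)]
    omega

theorem tau_le_last {u : ℕ} {s : ℕ} (hs : s ≤ n - 1) :
    tauD n k i u s ≤ tauD n k i u (n - 1) :=
  (tau_strictMono hk hi1 hik hin).monotone hs

variable (hco : Nat.Coprime n (n - k))
include hco

theorem exp_upper (u : Fin n) {t : ℕ} (ht : tauD n k i u.val (n - 1) ≤ t) (v : Fin n) :
    HasWalk (DkiAdj n k i) t u v := by
  haveI : NeZero n := ⟨by omega⟩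
  set g : (ZMod n)ˣ := ZMod.unitOfCoprime (n - k) hco.symm with hg
  set c : ZMod n := ((v.val + t : ℕ) : ZMod n) - ((u.val : ℕ) : ZMod n) with hc
  set s : ℕ := (c * (g⁻¹ : (ZMod n)ˣ)).val with hsdef
  have hsn : s < n := ZMod.val_lt _
  have h1 : ((s : ℕ) : ZMod n) = c * (g⁻¹ : (ZMod n)ˣ) := ZMod.natCast_rightInverse _
  have hgc : (g : ZMod n) = ((n - k : ℕ) : ZMod n) := ZMod.coe_unitOfCoprime _ _
  have h2 : ((u.val + s * (n - k) : ℕ) : ZMod n) = ((v.val + t : ℕ) : ZMod n) := by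
    push_cast
    rw [h1, ← hgc]
    rw [Units.inv_mul_cancel_right c g, hc]
    push_cast
    ring
  have hmod : v.val + t ≡ u.val + s * (n - k) [MOD n] :=
    ((ZMod.natCast_eq_natCast_iff _ _ _).mp h2.symm)
  exact reach_bwd hk hi1 hik hin u t s v
    (le_trans (tau_le_last hk hi1 hik hin (by omega)) ht) hmod

theorem exp_lower (u : Fin n) :
    ∃ v : Fin n, ¬ HasWalk (DkiAdj n k i) (tauD n k i u.val (n - 1) - 1) u v := by
  set t₀ := tauD n k i u.val (n - 1) - 1 with ht₀
  have hnt : t₀ ≤ n * t₀ := Nat.le_mul_of_pos_left _ (by omega)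
  set wv := (u.val + (n - 1) * (n - k) + n * t₀ - t₀) % n with hwv
  have hwn : wv < n := Nat.mod_lt _ (by omega)
  refine ⟨⟨wv, hwn⟩, fun hwalk => ?_⟩
  have hwc : wv + t₀ ≡ u.val + (n - 1) * (n - k) [MOD n] := by
    calc wv + t₀ ≡ (u.val + (n - 1) * (n - k) + n * t₀ - t₀) + t₀ [MOD n] :=
          (Nat.mod_modEq _ n).add_right t₀
      _ = (u.val + (n - 1) * (n - k)) + n * t₀ := by omega
      _ ≡ (u.val + (n - 1) * (n - k)) + 0 [MOD n] :=
          Nat.ModEq.add_left _ ((Nat.modEq_zero_iff_dvd).mpr ⟨t₀, rfl⟩)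
      _ = u.val + (n - 1) * (n - k) := by omega
  obtain ⟨s, hs, hcong⟩ := reach_fwd hk hi1 hik hin u t₀ _ hwalk
  have hpos : 1 ≤ tauD n k i u.val (n - 1) := by
    have := tau_ge hk hi1 hik hin (u := u.val) (n - 1); omega
  have hsn : s ≤ n - 2 := by
    by_contra hcon
    push_neg at hcon
    have := tau_le_last hk hi1 hik hin (u := u.val) (s := n - 1) (le_refl _)
    have hmono := (tau_strictMono hk hi1 hik hin (u := u.val)).monotone
      (show n - 1 ≤ s by omega)
    omega
  have hc2 : u.val + s * (n - k) ≡ u.val + (n - 1) * (n - k) [MOD n] :=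
    hcong.symm.trans hwc
  have hc3 : s * (n - k) ≡ (n - 1) * (n - k) [MOD n] :=
    Nat.ModEq.add_left_cancel' u.val hc2
  have hle : s * (n - k) ≤ (n - 1) * (n - k) := Nat.mul_le_mul_right _ (by omega)
  have hdvd : n ∣ (n - 1) * (n - k) - s * (n - k) := (Nat.modEq_iff_dvd' hle).mp hc3
  rw [← Nat.sub_mul] at hdvd
  have hdvd2 : n ∣ (n - 1 - s) := hco.dvd_of_dvd_mul_right hdvd
  have hlt : 0 < n - 1 - s := by omega
  have := Nat.le_of_dvd hlt hdvd2
  omega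

theorem localExp_eq (u : Fin n) :
    localExp (DkiAdj n k i) u = tauD n k i u.val (n - 1) := by
  unfold localExp
  apply le_antisymm
  · exact Nat.sInf_le (fun t ht v => exp_upper hk hi1 hik hin hco u ht v)
  · apply le_csInf
    · exact ⟨_, fun t ht v => exp_upper hk hi1 hik hin hco u ht v⟩
    · intro b hb
      by_contra hcon
      push_neg at hcon
      obtain ⟨v, hv⟩ := exp_lower hk hi1 hik hin hco u
      have hpos : 1 ≤ tauD n k i u.val (n - 1) := by
        have := tau_ge hk hi1 hik hin (u := u.val) (n - 1); omega
      exact hv (hb _ (by omega) v)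

end Expo

/-- Let `n, k` be positive integers with `gcd(n, n-k) = 1` and
`1 ≤ i ≤ min{k+1, n-k-1}`. Then `D_{k,i}` is primitive and for every `1 ≤ m ≤ n`
its `m`-th smallest local exponent is attained at `v_m` and equals
`(n-2)(n-k) + 1 - i + m`. -/
theorem stmt0 (n k i : ℕ) (hn : 0 < n) (hk : 0 < k)
    (hgcd : Nat.gcd n (n - k) = 1)
    (hi1 : 1 ≤ i) (hi2 : i ≤ min (k + 1) (n - k - 1)) :
    IsPrimitive (DkiAdj n k i) ∧
    ∀ m : ℕ, ∀ _hm1 : 1 ≤ m, ∀ _hm2 : m ≤ n,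
      kthSmallest (localExp (DkiAdj n k i)) m
        = localExp (DkiAdj n k i) ⟨m - 1, by omega⟩ ∧
      localExp (DkiAdj n k i) ⟨m - 1, by omega⟩
        = (n - 2) * (n - k) + 1 - i + m := by
  have hik : i ≤ k + 1 := le_trans hi2 (min_le_left _ _)
  have hin' : i ≤ n - k - 1 := le_trans hi2 (min_le_right _ _)
  have hkn : k + 2 ≤ n := by omega
  have hin : i + k + 1 ≤ n := by omega
  have hk1 : 1 ≤ k := hk
  have hco : Nat.Coprime n (n - k) := hgcd
  have hmulge : n - k ≤ (n - 2) * (n - k) := Nat.le_mul_of_pos_left _ (by omega)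
  have hmul2 : n - 2 ≤ (n - 2) * (n - k) := Nat.le_mul_of_pos_right _ (by omega)
  have hexp : ∀ u : Fin n, localExp (DkiAdj n k i) u = (n - 2) * (n - k) + 2 - i + u.val := by
    intro u
    rw [localExp_eq hk1 hi1 hik hin hco u, tau_last hk1 hi1 hik hin]
    omega
  constructor
  · constructor
    · intro u v
      exact ⟨_, exp_upper hk1 hi1 hik hin hco u (le_refl _) v⟩
    · refine ⟨(n - 2) * (n - k) + n + 1 - i, by omega, fun u v => ?_⟩
      apply exp_upper hk1 hi1 hik hin hco u ?_ v
      rw [tau_last hk1 hi1 hik hin]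
      have := u.isLt
      omega
  · intro m hm1 hm2
    have hsort : Multiset.sort (Finset.univ.val.map (localExp (DkiAdj n k i))) (· ≤ ·)
        = (List.range n).map (fun j => (n - 2) * (n - k) + 2 - i + j) := by
      have hmap : (Finset.univ.val.map (localExp (DkiAdj n k i))) =
          ↑((List.range n).map (fun j => (n - 2) * (n - k) + 2 - i + j)) := by
        rw [Fin.univ_def]
        show ((↑(List.finRange n) : Multiset (Fin n)).map (localExp (DkiAdj n k i))) = _
        rw [Multiset.map_coe]
        apply congrArg Multiset.ofList
        calc (List.finRange n).map (localExp (DkiAdj n k i))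
            = (List.finRange n).map ((fun j => (n - 2) * (n - k) + 2 - i + j) ∘ Fin.val) := by
              apply List.map_congr_left
              intro u _
              exact hexp u
          _ = ((List.finRange n).map Fin.val).map (fun j => (n - 2) * (n - k) + 2 - i + j) := by
              rw [List.map_map]
          _ = (List.range n).map (fun j => (n - 2) * (n - k) + 2 - i + j) := by
              rw [show (List.finRange n).map Fin.val = List.range n from List.ext_getElem (by simp) (by simp)]
      rw [hmap]
      refine List.Perm.eq_of_pairwise' (Multiset.pairwise_sort _ _) ?_
        (Multiset.coe_eq_coe.mp (Multiset.sort_eq _ _))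
      exact List.Pairwise.map _ (fun a b hab => by omega) (List.pairwise_lt_range (n := n))
    unfold kthSmallest
    rw [hsort, List.getD_eq_getElem _ _ (by simpa using by omega)]
    simp only [List.getElem_map, List.getElem_range]
    refine ⟨?_, ?_⟩
    · rw [hexp ⟨m - 1, by omega⟩]
    · rw [hexp ⟨m - 1, by omega⟩]
      simp only []
      omega
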